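/- arXiv:1507.05955 — 5 statements merged into one kernel-verified Lean document; each statement's English description precedes it below -/
import Mathlib

section
/- Let X be a finite set equipped with two linear orders ≤₁ and ≤₂ such that the two orders have the same adjacency (neighbour) relation, i.e., for all x, y ∈ X, x is covered by y or y is covered by x with respect to ≤₁ if and only if x is covered by y or y is covered by x with respect to ≤₂. Then either the two orders are equal (x ≤₁ y ↔ x ≤₂ y for all x, y) or they are reverses of each other (x ≤₁ y ↔ y ≤₂ x for all x, y). -/
/-- `y` covers `x` with respect to the linear order `r`: `x < y` and no element lies
strictly between them. -/
def CoversWrt {X : Type*} (r : LinearOrder X) (x y : X) : Prop :=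
  r.lt x y ∧ ¬ ∃ z, r.lt x z ∧ r.lt z y

/-- `x` and `y` are adjacent (neighbours) w.r.t. `r`: one covers the other. -/
def AdjWrt {X : Type*} (r : LinearOrder X) (x y : X) : Prop :=
  CoversWrt r x y ∨ CoversWrt r y x

lemma covers_iff_lem {X : Type*} [r : LinearOrder X] {n : ℕ} (e : Fin n ≃o X)
    (i j : Fin n) : CoversWrt r (e i) (e j) ↔ (i : ℕ) + 1 = (j : ℕ) := by
  have h1 : ∀ a b : Fin n, r.lt (e a) (e b) ↔ a < b := fun a b => e.lt_iff_lt
  have key : CoversWrt r (e i) (e j) ↔ (i < j ∧ ¬ ∃ k : Fin n, i < k ∧ k < j) := by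
    constructor
    · rintro ⟨hlt, hne⟩
      refine ⟨(h1 _ _).mp hlt, ?_⟩
      rintro ⟨k, hk1, hk2⟩
      exact hne ⟨e k, (h1 _ _).mpr hk1, (h1 _ _).mpr hk2⟩
    · rintro ⟨hlt, hne⟩
      refine ⟨(h1 _ _).mpr hlt, ?_⟩
      rintro ⟨z, hz1, hz2⟩
      refine hne ⟨e.symm z, ?_, ?_⟩
      · have := (h1 i (e.symm z)); rw [e.apply_symm_apply] at this; exact this.mp hz1
      · have := (h1 (e.symm z) j); rw [e.apply_symm_apply] at this; exact this.mp hz2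
  rw [key]
  constructor
  · rintro ⟨h, hn⟩
    rw [Fin.lt_def] at h
    by_contra hne
    have hj := j.isLt
    exact hn ⟨⟨(i : ℕ) + 1, by omega⟩, by rw [Fin.lt_def]; simp, by rw [Fin.lt_def]; simp; omega⟩
  · intro h
    refine ⟨by rw [Fin.lt_def]; omega, ?_⟩
    rintro ⟨k, hk1, hk2⟩
    rw [Fin.lt_def] at hk1 hk2
    omega

lemma adj_iff_lem {X : Type*} [r : LinearOrder X] {n : ℕ} (e : Fin n ≃o X)
    (i j : Fin n) :
    AdjWrt r (e i) (e j) ↔ ((i : ℕ) + 1 = (j : ℕ) ∨ (j : ℕ) + 1 = (i : ℕ)) := by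
  unfold AdjWrt
  rw [covers_iff_lem e i j, covers_iff_lem e j i]

lemma le_iff_lem {X : Type*} [r : LinearOrder X] {n : ℕ} (e : Fin n ≃o X) (i j : Fin n) :
    r.le (e.toEquiv i) (e.toEquiv j) ↔ i ≤ j :=
  e.le_iff_le

lemma fin_id {n : ℕ} (σ : Equiv.Perm (Fin n))
    (A : ∀ i j : Fin n, ((i : ℕ) + 1 = (j : ℕ) ∨ (j : ℕ) + 1 = (i : ℕ)) ↔
      ((σ i : ℕ) + 1 = (σ j : ℕ) ∨ (σ j : ℕ) + 1 = (σ i : ℕ)))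
    (h0 : ∀ i : Fin n, (i : ℕ) = 0 → σ i = i) : ∀ i, σ i = i := by
  have main : ∀ m, ∀ hm : m < n, σ ⟨m, hm⟩ = ⟨m, hm⟩ := by
    intro m
    induction m using Nat.strong_induction_on with
    | _ m IH =>
      intro hm
      match m, hm with
      | 0, hm => exact h0 _ rfl
      | (k+1), hm =>
        have hk : k < n := by omega
        have hσk : σ ⟨k, hk⟩ = ⟨k, hk⟩ := IH k (by omega) hk
        have hadj := (A ⟨k, hk⟩ ⟨k + 1, hm⟩).mp (Or.inl rfl)
        rw [hσk] at hadj
        rcases hadj with h | h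
        · exact Fin.ext h.symm
        · have h' : (σ ⟨k + 1, hm⟩ : ℕ) + 1 = k := h
          have hk1 : 1 ≤ k := by omega
          have hkm : k - 1 < n := by omega
          have hprev : σ ⟨k - 1, hkm⟩ = ⟨k - 1, hkm⟩ := IH (k - 1) (by omega) hkm
          have heq : σ ⟨k + 1, hm⟩ = σ ⟨k - 1, hkm⟩ := by
            rw [hprev]; exact Fin.ext (by show (σ ⟨k + 1, hm⟩ : ℕ) = k - 1; omega)
          have := σ.injective heq
          have hvv := congrArg Fin.val this
          simp only [Fin.val_mk] at hvv
          omega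
  intro i
  have := main i.val i.isLt
  simpa using this

lemma fin_key {n : ℕ} (σ : Equiv.Perm (Fin n))
    (A : ∀ i j : Fin n, ((i : ℕ) + 1 = (j : ℕ) ∨ (j : ℕ) + 1 = (i : ℕ)) ↔
      ((σ i : ℕ) + 1 = (σ j : ℕ) ∨ (σ j : ℕ) + 1 = (σ i : ℕ))) :
    (∀ i, σ i = i) ∨ (∀ i : Fin n, (σ i : ℕ) = n - 1 - (i : ℕ)) := by
  by_cases hn : n = 0
  · left; intro i; exact absurd i.isLt (by omega)
  have hn' : 0 < n := by omega
  set z : Fin n := ⟨0, hn'⟩ with hz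
  have hend : (σ z : ℕ) = 0 ∨ (σ z : ℕ) = n - 1 := by
    by_contra hcon
    push_neg at hcon
    obtain ⟨h1, h2⟩ := hcon
    have hzk : (σ z : ℕ) < n := (σ z).isLt
    set a : Fin n := ⟨(σ z : ℕ) - 1, by omega⟩ with ha'
    set b : Fin n := ⟨(σ z : ℕ) + 1, by omega⟩ with hb'
    have ha := (A (σ.symm a) z).mpr (by
      rw [σ.apply_symm_apply]
      left
      simp [ha']
      omega)
    have hb := (A (σ.symm b) z).mpr (by
      rw [σ.apply_symm_apply]
      right
      simp [hb'])
    have hza : (z : ℕ) = 0 := rfl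
    have ha1 : (σ.symm a : ℕ) = 1 := by omega
    have hb1 : (σ.symm b : ℕ) = 1 := by omega
    have hab : σ.symm a = σ.symm b := Fin.ext (by omega)
    have hab2 := σ.symm.injective hab
    have hvv : (σ z : ℕ) - 1 = (σ z : ℕ) + 1 := congrArg Fin.val hab2
    omega
  rcases hend with h | h
  · left
    apply fin_id σ A
    intro i hi
    have hiz : i = z := Fin.ext hi
    subst hiz
    exact Fin.ext h
  · right
    set σ' : Equiv.Perm (Fin n) := σ.trans Fin.revPerm with hσ'
    have hval : ∀ i, (σ' i : ℕ) = n - 1 - (σ i : ℕ) := by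
      intro i
      have := (σ i).isLt
      simp [hσ', Fin.revPerm, Fin.val_rev]
      omega
    have A' : ∀ i j : Fin n, ((i : ℕ) + 1 = (j : ℕ) ∨ (j : ℕ) + 1 = (i : ℕ)) ↔
        ((σ' i : ℕ) + 1 = (σ' j : ℕ) ∨ (σ' j : ℕ) + 1 = (σ' i : ℕ)) := by
      intro i j
      rw [A i j, hval i, hval j]
      have := (σ i).isLt
      have := (σ j).isLt
      omega
    have h0' : ∀ i : Fin n, (i : ℕ) = 0 → σ' i = i := by
      intro i hi
      have hiz : i = z := Fin.ext hi
      subst hiz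
      have hz0 : (z : ℕ) = 0 := rfl
      have hb := (σ z).isLt
      exact Fin.ext (by rw [hval]; omega)
    have hid := fin_id σ' A' h0'
    intro i
    have := congrArg Fin.val (hid i)
    rw [hval] at this
    have := (σ i).isLt
    have := i.isLt
    omega

/-- If two linear orders on a finite set have the same adjacency
relation, then they are equal or reverses of each other. -/
theorem stmt4 {X : Type*} [Fintype X] (r₁ r₂ : LinearOrder X)
    (hadj : ∀ x y : X, AdjWrt r₁ x y ↔ AdjWrt r₂ x y) :
    (∀ x y : X, r₁.le x y ↔ r₂.le x y) ∨ (∀ x y : X, r₁.le x y ↔ r₂.le y x) := by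
  set n := Fintype.card X with hn
  let e₁ := @monoEquivOfFin X _ r₁ n rfl
  let e₂ := @monoEquivOfFin X _ r₂ n rfl
  let σ : Equiv.Perm (Fin n) := e₁.toEquiv.trans e₂.toEquiv.symm
  have hσ : ∀ i, σ i = e₂.symm (e₁ i) := fun i => rfl
  have A : ∀ i j : Fin n, ((i : ℕ) + 1 = (j : ℕ) ∨ (j : ℕ) + 1 = (i : ℕ)) ↔
      ((σ i : ℕ) + 1 = (σ j : ℕ) ∨ (σ j : ℕ) + 1 = (σ i : ℕ)) := by
    intro i j
    rw [← @adj_iff_lem X r₁ n e₁ i j, hadj]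
    rw [hσ i, hσ j, ← @adj_iff_lem X r₂ n e₂ (e₂.symm (e₁ i)) (e₂.symm (e₁ j))]
    rw [e₂.apply_symm_apply, e₂.apply_symm_apply]
  have h2 : ∀ i : Fin n, e₂.toEquiv (σ i) = e₁.toEquiv i := fun i =>
    e₂.toEquiv.apply_symm_apply (e₁.toEquiv i)
  rcases fin_key σ A with hid | hrev
  · left
    intro x y
    obtain ⟨i, rfl⟩ := e₁.toEquiv.surjective x
    obtain ⟨j, rfl⟩ := e₁.toEquiv.surjective y
    have l1 : r₁.le (e₁.toEquiv i) (e₁.toEquiv j) ↔ i ≤ j := @le_iff_lem X r₁ n e₁ i j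
    have l2 : r₂.le (e₂.toEquiv (σ i)) (e₂.toEquiv (σ j)) ↔ σ i ≤ σ j :=
      @le_iff_lem X r₂ n e₂ (σ i) (σ j)
    rw [h2 i, h2 j] at l2
    rw [l1, l2, hid i, hid j]
  · right
    intro x y
    obtain ⟨i, rfl⟩ := e₁.toEquiv.surjective x
    obtain ⟨j, rfl⟩ := e₁.toEquiv.surjective y
    have l1 : r₁.le (e₁.toEquiv i) (e₁.toEquiv j) ↔ i ≤ j := @le_iff_lem X r₁ n e₁ i j
    have l2 : r₂.le (e₂.toEquiv (σ j)) (e₂.toEquiv (σ i)) ↔ σ j ≤ σ i :=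
      @le_iff_lem X r₂ n e₂ (σ j) (σ i)
    rw [h2 i, h2 j] at l2
    rw [l1, l2, Fin.le_def, Fin.le_def, hrev i, hrev j]
    have := i.isLt
    have := j.isLt
    omega
end

section
/- Let X be a finite set of n elements with a linear order ≤, and let k, t be integers with 1 ≤ t ≤ k−1 and k−t+1 ≤ n. Let T be the set of the k−t+1 largest elements of X under ≤, let u be the smallest element of T and v the second smallest element of T. Let ≤' be the linear order on X obtained from ≤ by transposing u and v (i.e., the order induced by composing with the permutation swapping u and v). Then for every k-element subset Q of X that does not contain all of T, the t-th smallest element of Q with respect to ≤ equals the t-th smallest element of Q with respect to ≤'. In particular, any family of k-element queries no member of which contains T cannot distinguish the orders ≤ and ≤'. -/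
/-- `x` is the `t`-th smallest element of the finite set `Q` with respect to the strict
order `lt`: it lies in `Q` and exactly `t - 1` elements of `Q` are strictly below it. -/
def IsNthSmallestBy {X : Type*} (lt : X → X → Prop) (Q : Finset X) (t : ℕ) (x : X) : Prop :=
  x ∈ Q ∧ {y | y ∈ Q ∧ lt y x}.ncard = t - 1

/-- Let `X` have `n` elements, `1 ≤ t ≤ k - 1`, `k - t + 1 ≤ n`.
Let `T` be the set of the `k - t + 1` largest elements of `X`, `u` the smallest and
`v` the second smallest element of `T`, and let `≤'` be the order obtained from `≤` by
transposing `u` and `v`. Then every `k`-element query that does not contain all of `T`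
returns the same `t`-th smallest element under `≤` and under `≤'`; in particular a
family of such queries cannot distinguish the two orders. -/
theorem stmt6 {X : Type*} [Fintype X] [LinearOrder X] [DecidableEq X] (n k t : ℕ)
    (hn : Fintype.card X = n) (ht1 : 1 ≤ t) (htk : t ≤ k - 1) (hkn : k - t + 1 ≤ n)
    (T : Finset X) (hTcard : T.card = k - t + 1)
    (hTtop : ∀ x ∈ T, ∀ y ∉ T, y < x)
    (u v : X) (hu : u ∈ T) (hv : v ∈ T) (huv : u < v)
    (humin : ∀ w ∈ T, u ≤ w) (hvsec : ∀ w ∈ T, w ≠ u → v ≤ w) :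
    ∀ Q : Finset X, Q.card = k → ¬ T ⊆ Q →
      ∀ x : X, IsNthSmallestBy (· < ·) Q t x ↔
        IsNthSmallestBy (fun a b => Equiv.swap u v a < Equiv.swap u v b) Q t x := by
  intro Q hQk hQT x
  classical
  have hkt : t ≤ k := le_trans htk (Nat.sub_le k 1)
  have hk2 : 2 ≤ k := by omega
  have hnotT_lt_u : ∀ y, y ∉ T → y < u := fun y hy => hTtop u hu y hy
  have hlt_u : ∀ y : X, y < u ↔ y ∉ T := by
    intro y
    constructor
    · intro h hyT; exact absurd (humin y hyT) (not_le.mpr h)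
    · exact hnotT_lt_u y
  have hlt_v : ∀ y : X, y < v ↔ (y ∉ T ∨ y = u) := by
    intro y
    constructor
    · intro h
      by_cases hyT : y ∈ T
      · right; by_contra hne; exact absurd (hvsec y hyT hne) (not_le.mpr h)
      · left; exact hyT
    · rintro (h | rfl)
      · exact lt_trans (hnotT_lt_u y h) huv
      · exact huv
  -- there are at least `t` elements of `Q` outside `T`
  have hcard_lb : t ≤ (Q.filter (fun y => y ∉ T)).card := by
    obtain ⟨w, hwT, hwQ⟩ := Finset.not_subset.mp hQT
    have hsub : Q ∩ T ⊆ T.erase w := by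
      intro y hy
      rw [Finset.mem_inter] at hy
      exact Finset.mem_erase.mpr ⟨fun h => hwQ (h ▸ hy.1), hy.2⟩
    have h1 : (Q ∩ T).card ≤ k - t := by
      have := Finset.card_le_card hsub
      rw [Finset.card_erase_of_mem hwT, hTcard] at this
      omega
    have h2 : (Q.filter (fun y => y ∈ T)).card + (Q.filter (fun y => y ∉ T)).card = k := by
      rw [Finset.card_filter_add_card_filter_not, hQk]
    have h3 : Q.filter (fun y => y ∈ T) = Q ∩ T := by
      ext y; simp [Finset.mem_inter, Finset.mem_filter]
    rw [h3] at h2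
    omega
  have ncard_eq : ∀ (p : X → Prop) [DecidablePred p],
      {y | y ∈ Q ∧ p y}.ncard = (Q.filter p).card := by
    intro p hp
    have : {y | y ∈ Q ∧ p y} = ↑(Q.filter p) := by
      ext y; simp [Finset.mem_filter]
    rw [this, Set.ncard_coe_finset]
  by_cases hx : x = u ∨ x = v
  · -- both counts are at least `t`, so both sides fail
    have hge : ∀ (p : X → Prop) [DecidablePred p],
        (∀ y ∈ Q, y ∉ T → p y) → {y | y ∈ Q ∧ p y}.ncard ≠ t - 1 := by
      intro p hp hmono
      rw [ncard_eq p]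
      have : Q.filter (fun y => y ∉ T) ⊆ Q.filter p := by
        intro y hy
        rw [Finset.mem_filter] at hy ⊢
        exact ⟨hy.1, hmono y hy.1 hy.2⟩
      have := le_trans hcard_lb (Finset.card_le_card this)
      omega
    constructor
    · rintro ⟨hxQ, hcnt⟩
      exact absurd hcnt (by
        refine hge _ ?_
        intro y hyQ hyT
        have hyu : y < u := hnotT_lt_u y hyT
        rcases hx with rfl | rfl
        · exact hyu
        · exact lt_trans hyu huv)
    · rintro ⟨hxQ, hcnt⟩
      exact absurd hcnt (by
        refine hge _ ?_
        intro y hyQ hyT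
        have hyu : y < u := hnotT_lt_u y hyT
        have hyne_u : y ≠ u := ne_of_lt hyu
        have hyne_v : y ≠ v := ne_of_lt (lt_trans hyu huv)
        show Equiv.swap u v y < Equiv.swap u v x
        rw [Equiv.swap_apply_of_ne_of_ne hyne_u hyne_v]
        rcases hx with rfl | rfl
        · rw [Equiv.swap_apply_left]; exact lt_trans hyu huv
        · rw [Equiv.swap_apply_right]; exact hyu)
  · -- swap fixes x and the two filters coincide
    push_neg at hx
    obtain ⟨hxu, hxv⟩ := hx
    have hswapx : Equiv.swap u v x = x := Equiv.swap_apply_of_ne_of_ne hxu hxv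
    have hux : u < x ↔ v < x := by
      constructor
      · intro h
        have hxT : x ∈ T := by
          by_contra hxT
          exact absurd (hnotT_lt_u x hxT) (asymm h)
        exact lt_of_le_of_ne (hvsec x hxT hxu) (Ne.symm hxv)
      · intro h; exact lt_trans huv h
    have hfilter : Q.filter (fun y => y < x)
        = Q.filter (fun y => Equiv.swap u v y < Equiv.swap u v x) := by
      ext y
      simp only [Finset.mem_filter, hswapx]
      refine and_congr_right fun _ => ?_
      by_cases hyu : y = u
      · subst hyu; rw [Equiv.swap_apply_left]; exact hux
      by_cases hyv : y = v
      · subst hyv; rw [Equiv.swap_apply_right]; exact hux.symm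
      · rw [Equiv.swap_apply_of_ne_of_ne hyu hyv]
    unfold IsNthSmallestBy
    rw [ncard_eq (fun y => y < x), ncard_eq (fun y => Equiv.swap u v y < Equiv.swap u v x),
      hfilter]
end

section
/- Let X be a set with a linear order, let k, t be integers with 1 ≤ t ≤ k, and let a, b, c ∈ X satisfy a < b < c. Let Q be a (k−2)-element subset of X disjoint from {a, b, c}. If the t-th smallest element of Q ∪ {a, b} is a, then the t-th smallest element of Q ∪ {b, c} is not c. -/
/-- `x` is the `t`-th smallest element of the finite set `Q`:
it lies in `Q` and exactly `t - 1` elements of `Q` are strictly below it. -/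
def IsNthSmallest {X : Type*} [LinearOrder X] (Q : Finset X) (t : ℕ) (x : X) : Prop :=
  x ∈ Q ∧ {y | y ∈ Q ∧ y < x}.ncard = t - 1

/-- Let `a < b < c` and let `Q` be a `(k-2)`-set disjoint from
`{a, b, c}`. If the `t`-th smallest element of `Q ∪ {a, b}` is `a`, then the `t`-th
smallest element of `Q ∪ {b, c}` is not `c`. -/
theorem stmt8 {X : Type*} [LinearOrder X] [DecidableEq X] (k t : ℕ)
    (ht1 : 1 ≤ t) (htk : t ≤ k)
    (a b c : X) (hab : a < b) (hbc : b < c)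
    (Q : Finset X) (hQcard : Q.card = k - 2)
    (ha : a ∉ Q) (hb : b ∉ Q) (hc : c ∉ Q)
    (h : IsNthSmallest (Q ∪ {a, b}) t a) :
    ¬ IsNthSmallest (Q ∪ {b, c}) t c := by
  rintro ⟨_, hcnt'⟩
  obtain ⟨_, hcnt⟩ := h
  -- the set below a in Q ∪ {a,b} is just elements of Q below a
  have hA : {y | y ∈ (Q ∪ ({a, b} : Finset X)) ∧ y < a} = {y | y ∈ Q ∧ y < a} := by
    ext y
    simp only [Set.mem_setOf_eq, Finset.mem_union, Finset.mem_insert,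
      Finset.mem_singleton]
    constructor
    · rintro ⟨(hy | rfl | rfl), hlt⟩
      · exact ⟨hy, hlt⟩
      · exact absurd hlt (lt_irrefl _)
      · exact absurd hab (not_lt.2 hlt.le)
    · rintro ⟨hy, hlt⟩; exact ⟨Or.inl hy, hlt⟩
  rw [hA] at hcnt
  -- the set below c in Q ∪ {b,c} contains insert b {y ∈ Q | y < a}
  have hfin : ({y | y ∈ (Q ∪ ({b, c} : Finset X)) ∧ y < c}).Finite :=
    (Q ∪ ({b, c} : Finset X)).finite_toSet.subset (fun y hy => hy.1)
  have hsub : insert b {y | y ∈ Q ∧ y < a} ⊆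
      {y | y ∈ (Q ∪ ({b, c} : Finset X)) ∧ y < c} := by
    rintro y (rfl | ⟨hy, hlt⟩)
    · exact ⟨Finset.mem_union.2 (Or.inr (by simp)), hbc⟩
    · exact ⟨Finset.mem_union.2 (Or.inl hy), hlt.trans (hab.trans hbc)⟩
  have hfinA : ({y | y ∈ Q ∧ y < a} : Set X).Finite :=
    Q.finite_toSet.subset (fun y hy => hy.1)
  have hbnot : b ∉ {y | y ∈ Q ∧ y < a} := fun hy => hb hy.1
  have hcard : (insert b {y | y ∈ Q ∧ y < a}).ncard = t - 1 + 1 := by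
    rw [Set.ncard_insert_of_notMem hbnot hfinA, hcnt]
  have hle : (insert b {y | y ∈ Q ∧ y < a}).ncard ≤ t - 1 := by
    rw [← hcnt']
    exact Set.ncard_le_ncard hsub hfin
  omega
end

section
/- Let X be a finite set of n elements with a linear order, and let k, t be integers with 1 ≤ t, 2t ≤ k and n ≥ k+1. Let S be the set of the t−1 smallest elements of X and L the set of the k−t largest elements of X. Let Y ⊆ X be any subset with |Y| = t−1, and let a, b ∈ X \ (S ∪ L ∪ Y) with a < b. Then there exists a k-element subset Q of X with Y ∪ {a, b} ⊆ Q ⊆ Y ∪ {a, b} ∪ S ∪ L such that the t-th smallest element of Q is a. -/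
/-- Let `X` have `n ≥ k + 1` elements, `1 ≤ t`, `2t ≤ k`. Let `S` be
the set of the `t - 1` smallest and `L` the set of the `k - t` largest elements of `X`.
For any reference set `Y` of size `t - 1` and any `a < b` outside `S ∪ L ∪ Y`, there is
a `k`-element query `Q` with `Y ∪ {a, b} ⊆ Q ⊆ Y ∪ {a, b} ∪ S ∪ L` whose `t`-th smallest
element is `a`. -/
theorem stmt9 {X : Type*} [Fintype X] [LinearOrder X] [DecidableEq X] (n k t : ℕ)
    (hn : Fintype.card X = n) (ht1 : 1 ≤ t) (hk : 2 * t ≤ k) (hnk : k + 1 ≤ n)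
    (S L : Finset X)
    (hScard : S.card = t - 1) (hSbot : ∀ x ∈ S, ∀ y ∉ S, x < y)
    (hLcard : L.card = k - t) (hLtop : ∀ x ∈ L, ∀ y ∉ L, y < x)
    (Y : Finset X) (hYcard : Y.card = t - 1)
    (a b : X) (hab : a < b)
    (ha : a ∉ S ∪ L ∪ Y) (hb : b ∉ S ∪ L ∪ Y) :
    ∃ Q : Finset X, Q.card = k ∧ Y ∪ {a, b} ⊆ Q ∧ Q ⊆ Y ∪ {a, b} ∪ S ∪ L ∧
      IsNthSmallest Q t a := by
  simp only [Finset.mem_union, not_or] at ha hb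
  obtain ⟨⟨haS, haL⟩, haY⟩ := ha
  obtain ⟨⟨hbS, hbL⟩, hbY⟩ := hb
  have hSa : ∀ s ∈ S, s < a := fun s hs => hSbot s hs a haS
  have hLa : ∀ l ∈ L, a < l := fun l hl => hLtop l hl a haL
  have hLb : ∀ l ∈ L, b < l := fun l hl => hLtop l hl b hbL
  have hSL : Disjoint S L := by
    rw [Finset.disjoint_left]
    intro x hxS hxL
    exact absurd (hSa x hxS) (not_lt.mpr (hLa x hxL).le)
  set Yl : Finset X := Y.filter (· < a) with hYl
  have hm : Yl.card ≤ t - 1 := hYcard ▸ Finset.card_filter_le Y _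
  -- choose S'
  have hS1 : t - 1 - Yl.card ≤ (S \ Y).card := by
    have h1 : (S \ Y).card + (S ∩ Y).card = S.card := Finset.card_sdiff_add_card_inter S Y
    have h2 : (S ∩ Y).card ≤ Yl.card := Finset.card_le_card (by
      intro x hx
      rw [Finset.mem_inter] at hx
      exact Finset.mem_filter.mpr ⟨hx.2, hSa x hx.1⟩)
    omega
  obtain ⟨S', hS'sub, hS'card⟩ := Finset.exists_subset_card_eq hS1
  -- choose L'
  have hL1 : k - 2 * t + Yl.card ≤ (L \ Y).card := by
    have h1 : (L \ Y).card + (L ∩ Y).card = L.card := Finset.card_sdiff_add_card_inter L Y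
    have hdisj : Disjoint (L ∩ Y) Yl := by
      rw [Finset.disjoint_left]
      intro x hx hx'
      rw [Finset.mem_inter] at hx
      exact absurd (hLa x hx.1) (not_lt.mpr (Finset.mem_filter.mp hx').2.le)
    have h2 : (L ∩ Y).card + Yl.card ≤ Y.card := by
      rw [← Finset.card_union_of_disjoint hdisj]
      exact Finset.card_le_card (Finset.union_subset Finset.inter_subset_right
        (Finset.filter_subset _ _))
    omega
  obtain ⟨L', hL'sub, hL'card⟩ :=
    Finset.exists_subset_card_eq hL1
  have hS'S : S' ⊆ S := hS'sub.trans (Finset.sdiff_subset)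
  have hL'L : L' ⊆ L := hL'sub.trans (Finset.sdiff_subset)
  have hS'Y : Disjoint S' Y := Finset.disjoint_left.mpr fun x hx =>
    (Finset.mem_sdiff.mp (hS'sub hx)).2
  have hL'Y : Disjoint L' Y := Finset.disjoint_left.mpr fun x hx =>
    (Finset.mem_sdiff.mp (hL'sub hx)).2
  have hab' : a ≠ b := ne_of_lt hab
  refine ⟨Y ∪ {a, b} ∪ S' ∪ L', ?_, ?_, ?_, ?_, ?_⟩
  · -- cardinality
    have d1 : Disjoint Y ({a, b} : Finset X) := by
      rw [Finset.disjoint_right]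
      intro x hx
      simp only [Finset.mem_insert, Finset.mem_singleton] at hx
      rcases hx with rfl | rfl
      · exact haY
      · exact hbY
    have d2 : Disjoint (Y ∪ {a, b}) S' := by
      rw [Finset.disjoint_right]
      intro x hx
      simp only [Finset.mem_union, Finset.mem_insert, Finset.mem_singleton, not_or]
      exact ⟨Finset.disjoint_left.mp hS'Y hx,
        fun h => haS (h ▸ hS'S hx), fun h => hbS (h ▸ hS'S hx)⟩
    have d3 : Disjoint (Y ∪ {a, b} ∪ S') L' := by
      rw [Finset.disjoint_right]
      intro x hx
      simp only [Finset.mem_union, Finset.mem_insert, Finset.mem_singleton, not_or]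
      refine ⟨⟨Finset.disjoint_left.mp hL'Y hx,
        fun h => haL (h ▸ hL'L hx), fun h => hbL (h ▸ hL'L hx)⟩, fun h => ?_⟩
      exact Finset.disjoint_left.mp hSL (hS'S h) (hL'L hx)
    rw [Finset.card_union_of_disjoint d3, Finset.card_union_of_disjoint d2,
      Finset.card_union_of_disjoint d1, hYcard, hS'card, hL'card]
    have : ({a, b} : Finset X).card = 2 := by
      rw [Finset.card_insert_of_notMem (by simp [hab']), Finset.card_singleton]
    omega
  · exact (Finset.subset_union_left).trans Finset.subset_union_left
  · exact Finset.union_subset_union (Finset.union_subset_union_right hS'S) hL'L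
  · simp
  · -- counting elements below a
    have hset : {y | y ∈ Y ∪ {a, b} ∪ S' ∪ L' ∧ y < a} = ↑(Yl ∪ S') := by
      ext x
      simp only [Set.mem_setOf_eq, Finset.coe_union, Set.mem_union, Finset.mem_coe,
        Finset.mem_union, Finset.mem_insert, Finset.mem_singleton, hYl, Finset.mem_filter]
      constructor
      · rintro ⟨(((hx | rfl | rfl) | hx) | hx), hlt⟩
        · exact Or.inl ⟨hx, hlt⟩
        · exact absurd hlt (lt_irrefl _)
        · exact absurd hlt (asymm hab)
        · exact Or.inr hx
        · exact absurd hlt (not_lt.mpr (hLa x (hL'L hx)).le)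
      · rintro (⟨hx, hlt⟩ | hx)
        · exact ⟨Or.inl (Or.inl (Or.inl hx)), hlt⟩
        · exact ⟨Or.inl (Or.inr hx), hSa x (hS'S hx)⟩
    rw [hset, Set.ncard_coe_finset,
      Finset.card_union_of_disjoint (Finset.disjoint_left.mpr fun x hx =>
        Finset.disjoint_right.mp hS'Y (Finset.mem_filter.mp hx).1), hS'card]
    rw [← hYl]
    omega
end

section
/- Let X be a finite set of n elements with a linear order, let k be an integer with k ≤ n, and let t_1 < t_2 < ... < t_s be integers with 1 ≤ t_1 and t_s ≤ k. Let S' be the set of the t_s − 1 smallest elements of X. Then for every k-element subset Q of X with S' ⊆ Q: (i) the t_s-th smallest element of Q equals the minimum of Q \ S', and (ii) for every i < s, the t_i-th smallest element of Q belongs to S'. Hence by always including S' in a query, a (k, t_1, ..., t_s) scale simulates a (k − t_s + 1, 1) scale on X \ S'. -/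
lemma aux_count {X : Type*} [Fintype X] [LinearOrder X] [DecidableEq X] (Q : Finset X)
    (x : X) : {y | y ∈ Q ∧ y < x}.ncard = (Q.filter (fun y => y < x)).card := by
  rw [← Set.ncard_coe_finset]
  congr 1
  ext y
  simp [Finset.mem_filter]

lemma aux_i {X : Type*} [Fintype X] [LinearOrder X] [DecidableEq X] (Q S' : Finset X)
    (m : ℕ) (hScard : S'.card = m - 1) (hSbot : ∀ x ∈ S', ∀ y ∉ S', x < y)
    (hSQ : S' ⊆ Q) (x : X) : IsNthSmallest Q m x ↔ IsLeast ↑(Q \ S') x := by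
  have hnotS : ∀ z, z ∈ Q → z ∉ S' → S' ⊆ Q.filter (fun y => y < z) := by
    intro z _ hzS y hy
    rw [Finset.mem_filter]
    exact ⟨hSQ hy, hSbot y hy z hzS⟩
  constructor
  · rintro ⟨hxQ, hcard⟩
    rw [aux_count] at hcard
    have hxnotS : x ∉ S' := by
      intro hxS
      have hsub : Q.filter (fun y => y < x) ⊆ S'.erase x := by
        intro y hy
        rw [Finset.mem_filter] at hy
        rw [Finset.mem_erase]
        by_cases hyS : y ∈ S'
        · exact ⟨ne_of_lt hy.2, hyS⟩
        · exact absurd hy.2 (not_lt_of_gt (hSbot x hxS y hyS))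
      have h1 := Finset.card_le_card hsub
      rw [Finset.card_erase_of_mem hxS] at h1
      have hS1 : 1 ≤ S'.card := Finset.card_pos.mpr ⟨x, hxS⟩
      omega
    have hsub := hnotS x hxQ hxnotS
    have heq : Q.filter (fun y => y < x) = S' :=
      (Finset.eq_of_subset_of_card_le hsub (by omega)).symm
    constructor
    · simp [Finset.mem_sdiff, hxQ, hxnotS]
    · intro y hy
      rw [Finset.coe_sdiff] at hy
      obtain ⟨hyQ, hyS⟩ := hy
      by_contra hlt
      push_neg at hlt
      have hmem : y ∈ Q.filter (fun z => z < x) := Finset.mem_filter.mpr ⟨hyQ, hlt⟩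
      rw [heq] at hmem
      exact hyS hmem
  · rintro ⟨hx, hleast⟩
    rw [Finset.coe_sdiff] at hx hleast
    obtain ⟨hxQ, hxS⟩ := hx
    refine ⟨hxQ, ?_⟩
    rw [aux_count]
    have heq : Q.filter (fun y => y < x) = S' := by
      apply Finset.Subset.antisymm
      · intro y hy
        rw [Finset.mem_filter] at hy
        by_contra hyS
        exact absurd hy.2 (not_lt_of_ge (hleast ⟨hy.1, hyS⟩))
      · exact hnotS x hxQ hxS
    rw [heq, hScard]

lemma aux_ii {X : Type*} [Fintype X] [LinearOrder X] [DecidableEq X] (Q S' : Finset X)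
    (m r : ℕ) (hScard : S'.card = m - 1) (hSbot : ∀ x ∈ S', ∀ y ∉ S', x < y)
    (hSQ : S' ⊆ Q) (hr1 : 1 ≤ r) (hrm : r < m) (x : X)
    (hx : IsNthSmallest Q r x) : x ∈ S' := by
  obtain ⟨hxQ, hcard⟩ := hx
  rw [aux_count] at hcard
  by_contra hxS
  have hsub : S' ⊆ Q.filter (fun y => y < x) := by
    intro y hy
    rw [Finset.mem_filter]
    exact ⟨hSQ hy, hSbot y hy x hxS⟩
  have h1 := Finset.card_le_card hsub
  rw [hScard, hcard] at h1
  omega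

/-- Let `X` have `n ≥ k` elements, let `t 0 < t 1 < ⋯ < t (s-1)` be the
positions of a `(k, t_1, …, t_s)` scale with `1 ≤ t_1` and `t_s ≤ k`, and let `S'` be the
set of the `t_s - 1` smallest elements of `X`. Then for every `k`-element subset `Q`
containing `S'`: (i) the `t_s`-th smallest element of `Q` is the least element of
`Q \ S'`, and (ii) for every earlier position, the corresponding output element lies in
`S'`. -/
theorem stmt13 {X : Type*} [Fintype X] [LinearOrder X] [DecidableEq X] (n k s : ℕ)
    (hn : Fintype.card X = n) (hkn : k ≤ n) (hs : 1 ≤ s)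
    (t : Fin s → ℕ) (hmono : StrictMono t)
    (ht1 : 1 ≤ t ⟨0, by omega⟩) (htk : t ⟨s - 1, by omega⟩ ≤ k)
    (S' : Finset X) (hScard : S'.card = t ⟨s - 1, by omega⟩ - 1)
    (hSbot : ∀ x ∈ S', ∀ y ∉ S', x < y) :
    ∀ Q : Finset X, Q.card = k → S' ⊆ Q →
      (∀ x : X, IsNthSmallest Q (t ⟨s - 1, by omega⟩) x ↔ IsLeast ↑(Q \ S') x) ∧
      (∀ i : Fin s, (i : ℕ) < s - 1 →
        ∀ x : X, IsNthSmallest Q (t i) x → x ∈ S') := by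
  intro Q hQcard hSQ
  refine ⟨aux_i Q S' _ hScard hSbot hSQ, ?_⟩
  intro i hi x hx
  have hr1 : 1 ≤ t i := le_trans ht1 (hmono.monotone (by simp [Fin.le_def]))
  have hrm : t i < t ⟨s - 1, by omega⟩ := hmono (by simp [Fin.lt_def]; omega)
  exact aux_ii Q S' _ (t i) hScard hSbot hSQ hr1 hrm x hx
end
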